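/- Let c ≥ 0, η > 0, τ > 0 and t1 ≤ t2 be reals with η + τ ≤ t2 − t1, let α : ℝ → ℝ be a locally Lipschitz extended class-K function, and let φ : ℝ → ℝ be differentiable on [t1, t2]. Assume: (i) φ(t1) ≥ c; (ii) φ'(t) ≥ −c/η for all t ∈ [t1, t1 + η]; (iii) for every t ∈ [t1 + η, t2], if φ(t) ≥ c then φ'(t) ≥ −α(φ(t) − c), and if φ(t) < c then φ'(t) ≥ c/τ. Then φ(t) ≥ 0 for all t ∈ [t1, t2], and φ(t) ≥ c for all t ∈ [t1 + η + τ, t2]. -/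

import Mathlib

/-- If `φ` has derivative `D` on `[a,b]` with `D ≥ K`, then `φ s + K (t - s) ≤ φ t`. -/
lemma mono_aux_stmt2 {a b K : ℝ} {φ D : ℝ → ℝ}
    (hd : ∀ t ∈ Set.Icc a b, HasDerivAt φ (D t) t)
    (hK : ∀ t ∈ Set.Icc a b, K ≤ D t) :
    ∀ s ∈ Set.Icc a b, ∀ t ∈ Set.Icc a b, s ≤ t → φ s + K * (t - s) ≤ φ t := by
  have hd' : ∀ t ∈ Set.Icc a b, HasDerivAt (fun u => φ u - K * u) (D t - K) t := by
    intro t ht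
    exact (hd t ht).sub (by simpa using (hasDerivAt_id t).const_mul K)
  have hmono : MonotoneOn (fun u => φ u - K * u) (Set.Icc a b) := by
    apply monotoneOn_of_deriv_nonneg (convex_Icc a b)
    · exact fun t ht => (hd' t ht).continuousAt.continuousWithinAt
    · intro t ht
      rw [interior_Icc] at ht
      exact ((hd' t (Set.mem_Icc_of_Ioo ht)).differentiableAt).differentiableWithinAt
    · intro t ht
      rw [interior_Icc] at ht
      rw [(hd' t (Set.mem_Icc_of_Ioo ht)).deriv]
      have := hK t (Set.mem_Icc_of_Ioo ht)
      linarith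
  intro s hs t ht hst
  have h := hmono hs ht hst
  simp only at h
  nlinarith

/-- Forward invariance of `{φ ≥ m}` when `D ≥ 0` below the level `m`. -/
lemma invar_stmt2 {a b m : ℝ} {φ D : ℝ → ℝ}
    (hd : ∀ t ∈ Set.Icc a b, HasDerivAt φ (D t) t)
    (hpos : ∀ t ∈ Set.Icc a b, φ t < m → 0 ≤ D t)
    (h0 : m ≤ φ a) : ∀ t ∈ Set.Icc a b, m ≤ φ t := by
  intro t ht
  by_contra hlt
  push_neg at hlt
  set S := {r ∈ Set.Icc a t | m ≤ φ r} with hS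
  have hSsub : S ⊆ Set.Icc a t := fun r hr => hr.1
  have hSne : S.Nonempty := ⟨a, Set.left_mem_Icc.2 ht.1, h0⟩
  have hbdd : BddAbove S := (BddAbove.mono hSsub (bddAbove_Icc))
  have hScl : IsClosed S := by
    apply isClosed_of_closure_subset
    intro x hx
    have hxI : x ∈ Set.Icc a t :=
      isClosed_Icc.closure_subset (closure_mono hSsub hx)
    have hxab : x ∈ Set.Icc a b := ⟨hxI.1, hxI.2.trans ht.2⟩
    have hcont : ContinuousAt φ x := (hd x hxab).continuousAt
    have hne : (nhdsWithin x S).NeBot := mem_closure_iff_nhdsWithin_neBot.mp hx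
    refine ⟨hxI, ?_⟩
    exact ge_of_tendsto (hcont.tendsto.mono_left nhdsWithin_le_nhds)
      (Filter.eventually_of_mem self_mem_nhdsWithin (fun r (hr : r ∈ S) => hr.2))
  have husp : sSup S ∈ S := hScl.csSup_mem hSne hbdd
  set u := sSup S with hu
  obtain ⟨⟨hau, hut⟩, hmu⟩ := husp
  have hu_lt : u < t := lt_of_le_of_ne hut (fun h => by rw [h] at hmu; linarith)
  have hmono : MonotoneOn φ (Set.Icc u t) := by
    have hsubab : Set.Icc u t ⊆ Set.Icc a b :=
      Set.Icc_subset_Icc hau ht.2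
    apply monotoneOn_of_deriv_nonneg (convex_Icc u t)
    · exact fun r hr => (hd r (hsubab hr)).continuousAt.continuousWithinAt
    · intro r hr
      rw [interior_Icc] at hr
      exact ((hd r (hsubab (Set.mem_Icc_of_Ioo hr))).differentiableAt).differentiableWithinAt
    · intro r hr
      rw [interior_Icc] at hr
      have hrab : r ∈ Set.Icc a b := hsubab (Set.mem_Icc_of_Ioo hr)
      have hφr : φ r < m := by
        by_contra hge
        push_neg at hge
        have hrS : r ∈ S := ⟨⟨hau.trans hr.1.le, hr.2.le⟩, hge⟩
        exact absurd (le_csSup hbdd hrS) (not_le.2 hr.1)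
      rw [(hd r hrab).deriv]
      exact hpos r hrab hφr
  have := hmono (Set.left_mem_Icc.2 hu_lt.le) (Set.right_mem_Icc.2 hu_lt.le) hu_lt.le
  linarith

/-- **Corollary 1 of the paper, stated along a trajectory.** `φ t = h(x_t)` with `h` of
relative degree one and `D` the derivative of `φ`: malicious inputs for `η` time can
decrease `φ` at rate at most `c/η`; afterwards the synthesized policy increases `φ` at
rate at least `c/τ` below the level set `{φ ≥ c}` and satisfies the class-K condition on
it. Then the system is safe on `[t1, t2]` and returns to the level set by `t1 + η + τ`. -/
theorem stmt_2
    (c η τ t1 t2 : ℝ) (hc : 0 ≤ c) (hη : 0 < η) (hτ : 0 < τ)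
    (ht : t1 ≤ t2) (hsum : η + τ ≤ t2 - t1)
    (α : ℝ → ℝ) (hα_mono : StrictMono α) (hα0 : α 0 = 0)
    (hα_lip : LocallyLipschitz α)
    (φ D : ℝ → ℝ)
    (hdiff : ∀ t ∈ Set.Icc t1 t2, HasDerivAt φ (D t) t)
    (h1 : φ t1 ≥ c)
    (h2 : ∀ t ∈ Set.Icc t1 (t1 + η), D t ≥ - c / η)
    (h3 : ∀ t ∈ Set.Icc (t1 + η) t2,
      (φ t ≥ c → D t ≥ - α (φ t - c)) ∧ (φ t < c → D t ≥ c / τ)) :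
    (∀ t ∈ Set.Icc t1 t2, φ t ≥ 0) ∧
    (∀ t ∈ Set.Icc (t1 + η + τ) t2, φ t ≥ c) := by
  have hηt2 : t1 + η ≤ t2 := by linarith
  have hητt2 : t1 + η + τ ≤ t2 := by linarith
  have hsub1 : Set.Icc t1 (t1 + η) ⊆ Set.Icc t1 t2 :=
    Set.Icc_subset_Icc le_rfl hηt2
  -- Phase 1: φ ≥ 0 on [t1, t1+η]
  have phase1 : ∀ t ∈ Set.Icc t1 (t1 + η), 0 ≤ φ t := by
    intro t htm
    have hb := mono_aux_stmt2 (fun r hr => hdiff r (hsub1 hr)) h2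
      t1 (Set.left_mem_Icc.2 (by linarith)) t htm htm.1
    have h1' : t - t1 ≤ η := by linarith [htm.2]
    have h2' : t1 ≤ t := htm.1
    have hdiv : (-c / η) * (t - t1) ≥ -c := by
      rw [ge_iff_le, neg_div, neg_mul, neg_le_neg_iff]
      rw [div_mul_eq_mul_div, div_le_iff₀ hη]
      nlinarith
    linarith
  have hphi0 : 0 ≤ φ (t1 + η) :=
    phase1 (t1 + η) (Set.right_mem_Icc.2 (by linarith))
  -- derivative nonneg below level c on [t1+η, t2]
  have hd2 : ∀ t ∈ Set.Icc (t1 + η) t2, HasDerivAt φ (D t) t :=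
    fun r hr => hdiff r (Set.Icc_subset_Icc (by linarith) le_rfl hr)
  have hpos : ∀ t ∈ Set.Icc (t1 + η) t2, φ t < c → 0 ≤ D t := by
    intro t htm hφ
    have := (h3 t htm).2 hφ
    have : c / τ ≤ D t := this
    have hcτ : 0 ≤ c / τ := div_nonneg hc hτ.le
    linarith
  -- existence of a time t* in [t1+η, t1+η+τ] with φ t* ≥ c
  have hexists : ∃ ts ∈ Set.Icc (t1 + η) (t1 + η + τ), c ≤ φ ts := by
    by_contra hno
    push_neg at hno
    have hsub2 : Set.Icc (t1 + η) (t1 + η + τ) ⊆ Set.Icc (t1 + η) t2 :=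
      Set.Icc_subset_Icc le_rfl hητt2
    have hb := mono_aux_stmt2 (K := c / τ)
      (fun r hr => hd2 r (hsub2 hr))
      (fun r hr => (h3 r (hsub2 hr)).2 (hno r hr))
      (t1 + η) (Set.left_mem_Icc.2 (by linarith))
      (t1 + η + τ) (Set.right_mem_Icc.2 (by linarith)) (by linarith)
    have hlast := hno (t1 + η + τ) (Set.right_mem_Icc.2 (by linarith))
    have hval : c / τ * (t1 + η + τ - (t1 + η)) = c := by
      field_simp
      ring
    rw [show t1 + η + τ - (t1 + η) = τ by ring] at hb
    rw [div_mul_cancel₀ c (ne_of_gt hτ)] at hb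
    linarith
  obtain ⟨ts, hts, hφts⟩ := hexists
  have htsb : ts ∈ Set.Icc (t1 + η) t2 := ⟨hts.1, hts.2.trans hητt2⟩
  -- invariance from ts: φ ≥ c on [ts, t2]
  have hinv_c : ∀ t ∈ Set.Icc ts t2, c ≤ φ t := by
    apply invar_stmt2 (D := D)
    · exact fun r hr => hd2 r ⟨htsb.1.trans hr.1, hr.2⟩
    · exact fun r hr => hpos r ⟨htsb.1.trans hr.1, hr.2⟩
    · exact hφts
  -- invariance from t1+η: φ ≥ 0 on [t1+η, t2]
  have hinv_0 : ∀ t ∈ Set.Icc (t1 + η) t2, (0:ℝ) ≤ φ t := by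
    apply invar_stmt2 (D := D) hd2
    · intro r hr hφ
      exact hpos r hr (lt_of_lt_of_le hφ hc)
    · exact hphi0
  constructor
  · intro t htm
    rcases le_or_gt t (t1 + η) with hcase | hcase
    · exact phase1 t ⟨htm.1, hcase⟩
    · exact hinv_0 t ⟨hcase.le, htm.2⟩
  · intro t htm
    exact hinv_c t ⟨hts.2.trans htm.1, htm.2⟩
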